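/- Let V(ρ) = 2(1−6ρ²+ρ⁴)/(1+ρ²)². The functions h₀(ρ) := ρ/(1+ρ²) and h₁(ρ) := (1 + 9ρ² + 6ρ³·log((1−ρ)/(1+ρ))) / (3ρ²(1+ρ²)) both satisfy the homogeneous equation −(1−ρ²)h''(ρ) − (2(1−ρ²)/ρ)h'(ρ) + 2ρh'(ρ) + 2h(ρ) + (V(ρ)/ρ²)h(ρ) = 0 on (0,1), and their Wronskian satisfies h₀(ρ)h₁'(ρ) − h₀'(ρ)h₁(ρ) = −1/(ρ²(1−ρ²)) for all ρ ∈ (0,1). -/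

import Mathlib

/-- The potential `V(ρ) = 2(1−6ρ²+ρ⁴)/(1+ρ²)²`. -/
noncomputable def Vpot (ρ : ℝ) : ℝ := 2 * (1 - 6 * ρ ^ 2 + ρ ^ 4) / (1 + ρ ^ 2) ^ 2

/-- `h₀(ρ) = ρ/(1+ρ²)`. -/
noncomputable def h0 (ρ : ℝ) : ℝ := ρ / (1 + ρ ^ 2)

/-- `h₁(ρ) = (1 + 9ρ² + 6ρ³ log((1−ρ)/(1+ρ)))/(3ρ²(1+ρ²))`. -/
noncomputable def h1 (ρ : ℝ) : ℝ :=
  (1 + 9 * ρ ^ 2 + 6 * ρ ^ 3 * Real.log ((1 - ρ) / (1 + ρ))) / (3 * ρ ^ 2 * (1 + ρ ^ 2))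

noncomputable def Lg (ρ : ℝ) : ℝ := Real.log ((1 - ρ) / (1 + ρ))

/-- explicit first derivative of `h1` on `(0,1)` -/
noncomputable def h1d (ρ : ℝ) : ℝ :=
  (-6*ρ - 6*ρ^3 - 78*ρ^5 + 18*ρ^7 + (18*ρ^4 - 36*ρ^6 + 18*ρ^8) * Lg ρ)
    / (9*ρ^4 + 9*ρ^6 - 9*ρ^8 - 9*ρ^10)

/-- explicit first derivative of `h0` -/
noncomputable def h0d (ρ : ℝ) : ℝ := (1 - ρ^2) / (1 + ρ^2)^2

lemma hLg {ρ : ℝ} (hρ0 : 0 < ρ) (hρ1 : ρ < 1) :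
    HasDerivAt Lg (-2/(1-ρ^2)) ρ := by
  have hm : (0:ℝ) < 1 - ρ := by linarith
  have hp : (0:ℝ) < 1 + ρ := by linarith
  have hf : HasDerivAt (fun x : ℝ => (1 - x) / (1 + x))
      (((-1) * (1 + ρ) - (1 - ρ) * 1) / (1 + ρ)^2) ρ :=
    HasDerivAt.div ((hasDerivAt_id ρ).const_sub 1) ((hasDerivAt_id ρ).const_add 1) hp.ne'
  have hne : (1 - ρ) / (1 + ρ) ≠ 0 := div_ne_zero hm.ne' hp.ne'
  have := hf.log hne
  refine this.congr_deriv ?_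
  have h2 : (1:ℝ) - ρ^2 ≠ 0 := by nlinarith
  field_simp
  ring

lemma hH0 (ρ : ℝ) : HasDerivAt h0 (h0d ρ) ρ := by
  have hp : (0:ℝ) < 1 + ρ^2 := by positivity
  have h := HasDerivAt.div (hasDerivAt_id ρ) ((hasDerivAt_pow 2 ρ).const_add 1) hp.ne'
  have hfun : h0 = fun x : ℝ => x / (1 + x^2) := by funext x; rw [h0]
  rw [hfun, h0d]
  refine h.congr_deriv ?_
  have hne : (1:ℝ) + ρ^2 ≠ 0 := hp.ne'
  simp only [id]
  field_simp
  ring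

lemma hH0d (ρ : ℝ) : HasDerivAt h0d
    ((2*ρ^3 - 6*ρ) / (1+ρ^2)^3) ρ := by
  have hp : (0:ℝ) < 1 + ρ^2 := by positivity
  have hp2 : ((1:ℝ)+ρ^2)^2 ≠ 0 := by positivity
  have hnum : HasDerivAt (fun x : ℝ => 1 - x^2) (-(2*ρ)) ρ := by
    have := (hasDerivAt_pow 2 ρ).const_sub 1
    refine this.congr_deriv ?_
    push_cast; ring
  have hden : HasDerivAt (fun x : ℝ => (1+x^2)^2) (2*(1+ρ^2)*(2*ρ)) ρ := by
    have := ((hasDerivAt_pow 2 ρ).const_add 1).pow 2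
    refine this.congr_deriv ?_
    push_cast; ring
  have h := hnum.div hden hp2
  have hfun : h0d = fun x : ℝ => (1 - x^2) / (1 + x^2)^2 := by funext x; rw [h0d]
  rw [hfun]
  refine h.congr_deriv ?_
  have hne : (1:ℝ) + ρ^2 ≠ 0 := hp.ne'
  field_simp
  ring

lemma hH1 {ρ : ℝ} (hρ0 : 0 < ρ) (hρ1 : ρ < 1) : HasDerivAt h1 (h1d ρ) ρ := by
  have hp : (0:ℝ) < 1 + ρ^2 := by positivity
  have hm : (1:ℝ) - ρ^2 ≠ 0 := by nlinarith
  have hρ : ρ ≠ 0 := hρ0.ne'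
  have hB : (3*ρ^2*(1+ρ^2)) ≠ 0 := by positivity
  have hLρ := hLg hρ0 hρ1
  have hq : HasDerivAt (fun x : ℝ => 6*x^3) (18*ρ^2) ρ := by
    have := (hasDerivAt_pow 3 ρ).const_mul 6
    refine this.congr_deriv ?_
    push_cast; ring
  have hpoly : HasDerivAt (fun x : ℝ => 1 + 9*x^2) (18*ρ) ρ := by
    have := ((hasDerivAt_pow 2 ρ).const_mul 9).const_add 1
    refine this.congr_deriv ?_
    push_cast; ring
  have hN : HasDerivAt (fun x : ℝ => 1 + 9*x^2 + 6*x^3 * Lg x)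
      (18*ρ + ((18*ρ^2) * Lg ρ + 6*ρ^3 * (-2/(1-ρ^2)))) ρ := hpoly.add (hq.mul hLρ)
  have h1' : HasDerivAt (fun x : ℝ => 3*x^2) (6*ρ) ρ := by
    have := (hasDerivAt_pow 2 ρ).const_mul 3
    refine this.congr_deriv ?_
    push_cast; ring
  have h2' : HasDerivAt (fun x : ℝ => 1+x^2) (2*ρ) ρ := by
    have := (hasDerivAt_pow 2 ρ).const_add 1
    refine this.congr_deriv ?_
    push_cast; ring
  have hBd : HasDerivAt (fun x : ℝ => 3*x^2*(1+x^2)) (6*ρ*(1+ρ^2) + 3*ρ^2*(2*ρ)) ρ :=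
    h1'.mul h2'
  have h := hN.div hBd hB
  have hfun : h1 = fun x : ℝ => (1 + 9*x^2 + 6*x^3 * Lg x) / (3*x^2*(1+x^2)) := by
    funext x; rw [h1, Lg]
  rw [hfun, h1d]
  refine h.congr_deriv ?_
  have hD : (9*ρ^4 + 9*ρ^6 - 9*ρ^8 - 9*ρ^10) ≠ 0 := by
    have : 9*ρ^4 + 9*ρ^6 - 9*ρ^8 - 9*ρ^10 = 9*ρ^4*(1+ρ^2)^2*(1-ρ^2) := by ring
    rw [this]
    exact mul_ne_zero (by positivity) hm
  rw [show (9*ρ^4 + 9*ρ^6 - 9*ρ^8 - 9*ρ^10 : ℝ) = 9*ρ^4*(1+ρ^2)^2*(1-ρ^2) by ring]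
  field_simp
  ring

lemma hH1d {ρ : ℝ} (hρ0 : 0 < ρ) (hρ1 : ρ < 1) : HasDerivAt h1d
    (((-6 - 18*ρ^2 - 390*ρ^4 + 126*ρ^6 + (72*ρ^3 - 216*ρ^5 + 144*ρ^7) * Lg ρ
        + (18*ρ^4 - 36*ρ^6 + 18*ρ^8) * (-2/(1-ρ^2))) * (9*ρ^4 + 9*ρ^6 - 9*ρ^8 - 9*ρ^10)
      - (-6*ρ - 6*ρ^3 - 78*ρ^5 + 18*ρ^7 + (18*ρ^4 - 36*ρ^6 + 18*ρ^8) * Lg ρ)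
          * (36*ρ^3 + 54*ρ^5 - 72*ρ^7 - 90*ρ^9))
      / (9*ρ^4 + 9*ρ^6 - 9*ρ^8 - 9*ρ^10)^2) ρ := by
  have hp : (0:ℝ) < 1 + ρ^2 := by positivity
  have hm : (1:ℝ) - ρ^2 ≠ 0 := by nlinarith
  have hρ : ρ ≠ 0 := hρ0.ne'
  have hD : (9*ρ^4 + 9*ρ^6 - 9*ρ^8 - 9*ρ^10) ≠ 0 := by
    have : 9*ρ^4 + 9*ρ^6 - 9*ρ^8 - 9*ρ^10 = 9*ρ^4*(1+ρ^2)^2*(1-ρ^2) := by ring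
    rw [this]
    exact mul_ne_zero (by positivity) hm
  have hLρ := hLg hρ0 hρ1
  have hpoly : HasDerivAt (fun x : ℝ => -6*x - 6*x^3 - 78*x^5 + 18*x^7)
      (-6 - 18*ρ^2 - 390*ρ^4 + 126*ρ^6) ρ := by
    have := ((((hasDerivAt_pow 1 ρ).const_mul (-6)).sub
      ((hasDerivAt_pow 3 ρ).const_mul 6)).sub
      ((hasDerivAt_pow 5 ρ).const_mul 78)).add ((hasDerivAt_pow 7 ρ).const_mul 18)
    have e : (fun x : ℝ => -6*x - 6*x^3 - 78*x^5 + 18*x^7) = ((((fun y : ℝ => -6 * y ^ 1) - fun y => 6 * y ^ 3) - fun y => 78 * y ^ 5) + fun y => 18 * y ^ 7) := by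
      funext x; simp only [Pi.add_apply, Pi.sub_apply]; ring
    rw [e]
    refine this.congr_deriv ?_
    push_cast; ring
  have hq : HasDerivAt (fun x : ℝ => 18*x^4 - 36*x^6 + 18*x^8)
      (72*ρ^3 - 216*ρ^5 + 144*ρ^7) ρ := by
    have := (((hasDerivAt_pow 4 ρ).const_mul 18).sub
      ((hasDerivAt_pow 6 ρ).const_mul 36)).add ((hasDerivAt_pow 8 ρ).const_mul 18)
    refine this.congr_deriv ?_
    push_cast; ring
  have hN : HasDerivAt
      (fun x : ℝ => -6*x - 6*x^3 - 78*x^5 + 18*x^7 + (18*x^4 - 36*x^6 + 18*x^8) * Lg x)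
      (-6 - 18*ρ^2 - 390*ρ^4 + 126*ρ^6 + ((72*ρ^3 - 216*ρ^5 + 144*ρ^7) * Lg ρ
        + (18*ρ^4 - 36*ρ^6 + 18*ρ^8) * (-2/(1-ρ^2)))) ρ := hpoly.add (hq.mul hLρ)
  have hDen : HasDerivAt (fun x : ℝ => 9*x^4 + 9*x^6 - 9*x^8 - 9*x^10)
      (36*ρ^3 + 54*ρ^5 - 72*ρ^7 - 90*ρ^9) ρ := by
    have := ((((hasDerivAt_pow 4 ρ).const_mul 9).add
      ((hasDerivAt_pow 6 ρ).const_mul 9)).sub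
      ((hasDerivAt_pow 8 ρ).const_mul 9)).sub ((hasDerivAt_pow 10 ρ).const_mul 9)
    refine this.congr_deriv ?_
    push_cast; ring
  have h := hN.div hDen hD
  have hfun : h1d = fun x : ℝ =>
      (-6*x - 6*x^3 - 78*x^5 + 18*x^7 + (18*x^4 - 36*x^6 + 18*x^8) * Lg x)
        / (9*x^4 + 9*x^6 - 9*x^8 - 9*x^10) := by
    funext x; rw [h1d]
  rw [hfun]
  refine h.congr_deriv ?_
  ring

/-- `h₀` and `h₁` form a fundamental system of the homogeneous equation
`(E_λ)` with `λ = 1`, with Wronskian `h₀h₁' − h₀'h₁ = −1/(ρ²(1−ρ²))` on `(0,1)`. -/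
theorem stmt_18 : ∀ ρ ∈ Set.Ioo (0:ℝ) 1,
    (-(1 - ρ ^ 2) * deriv (deriv h0) ρ - (2 * (1 - ρ ^ 2) / ρ) * deriv h0 ρ
      + 2 * ρ * deriv h0 ρ + 2 * h0 ρ + (Vpot ρ / ρ ^ 2) * h0 ρ = 0) ∧
    (-(1 - ρ ^ 2) * deriv (deriv h1) ρ - (2 * (1 - ρ ^ 2) / ρ) * deriv h1 ρ
      + 2 * ρ * deriv h1 ρ + 2 * h1 ρ + (Vpot ρ / ρ ^ 2) * h1 ρ = 0) ∧
    h0 ρ * deriv h1 ρ - deriv h0 ρ * h1 ρ = -1 / (ρ ^ 2 * (1 - ρ ^ 2)) := by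
  rintro ρ ⟨hρ0, hρ1⟩
  have hp : (0:ℝ) < 1 + ρ^2 := by positivity
  have hm : (1:ℝ) - ρ^2 ≠ 0 := by nlinarith
  have hρ : ρ ≠ 0 := hρ0.ne'
  have hd0 : deriv h0 = h0d := funext fun x => (hH0 x).deriv
  have hd0' : deriv (deriv h0) ρ = (2*ρ^3 - 6*ρ) / (1+ρ^2)^3 := by
    rw [hd0]; exact (hH0d ρ).deriv
  have hd1 : deriv h1 ρ = h1d ρ := (hH1 hρ0 hρ1).deriv
  have hev : deriv h1 =ᶠ[nhds ρ] h1d := by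
    filter_upwards [Ioo_mem_nhds hρ0 hρ1] with x hx using (hH1 hx.1 hx.2).deriv
  have hd1' : deriv (deriv h1) ρ =
      ((-6 - 18*ρ^2 - 390*ρ^4 + 126*ρ^6 + (72*ρ^3 - 216*ρ^5 + 144*ρ^7) * Lg ρ
        + (18*ρ^4 - 36*ρ^6 + 18*ρ^8) * (-2/(1-ρ^2))) * (9*ρ^4 + 9*ρ^6 - 9*ρ^8 - 9*ρ^10)
      - (-6*ρ - 6*ρ^3 - 78*ρ^5 + 18*ρ^7 + (18*ρ^4 - 36*ρ^6 + 18*ρ^8) * Lg ρ)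
          * (36*ρ^3 + 54*ρ^5 - 72*ρ^7 - 90*ρ^9))
      / (9*ρ^4 + 9*ρ^6 - 9*ρ^8 - 9*ρ^10)^2 := by
    rw [hev.deriv_eq]; exact (hH1d hρ0 hρ1).deriv
  have hD : (9*ρ^4 + 9*ρ^6 - 9*ρ^8 - 9*ρ^10) ≠ 0 := by
    have : 9*ρ^4 + 9*ρ^6 - 9*ρ^8 - 9*ρ^10 = 9*ρ^4*(1+ρ^2)^2*(1-ρ^2) := by ring
    rw [this]
    exact mul_ne_zero (by positivity) hm
  have hpne : (1:ℝ) + ρ^2 ≠ 0 := hp.ne'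
  refine ⟨?_, ?_, ?_⟩
  · rw [hd0', hd0, h0d, h0, Vpot]
    field_simp
    ring
  · rw [hd1', hd1, h1d, h1, Vpot]
    rw [show Real.log ((1 - ρ) / (1 + ρ)) = Lg ρ from rfl]
    rw [show (9*ρ^4 + 9*ρ^6 - 9*ρ^8 - 9*ρ^10 : ℝ) = 9*ρ^4*(1+ρ^2)^2*(1-ρ^2) by ring]
    field_simp
    ring
  · rw [hd0, hd1, h0d, h1d, h0, h1]
    rw [show Real.log ((1 - ρ) / (1 + ρ)) = Lg ρ from rfl]
    rw [show (9*ρ^4 + 9*ρ^6 - 9*ρ^8 - 9*ρ^10 : ℝ) = 9*ρ^4*(1+ρ^2)^2*(1-ρ^2) by ring]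
    field_simp
    ring
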